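/- For m ≥ 6 even, the 3-percolation number of the grid P₅ □ Pₘ is at least 2m + 3 (i.e., no 3-percolating set of size 2m + 2 exists). -/

import Mathlib

open SimpleGraph

/-- The set of vertices eventually infected in `r`-neighbor bootstrap percolation
on the graph `G`, starting from the initially infected set `A`. -/
inductive Infected {V : Type*} (G : SimpleGraph V) (r : ℕ) (A : Set V) : V → Prop
  | init {v : V} : v ∈ A → Infected G r A v
  | step {v : V} (T : Finset V) : r ≤ T.card → (∀ u ∈ T, G.Adj u v) →
      (∀ u ∈ T, Infected G r A u) → Infected G r A v

/-- `A` is an `r`-percolating set of `G`. -/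
def Percolates {V : Type*} (G : SimpleGraph V) (r : ℕ) (A : Set V) : Prop :=
  ∀ v, Infected G r A v

/-- The `r`-percolation number of `G`: minimum size of an `r`-percolating set. -/
noncomputable def percNum (V : Type*) [Fintype V] (G : SimpleGraph V) (r : ℕ) : ℕ :=
  sInf {k | ∃ A : Finset V, A.card = k ∧ Percolates G r (↑A)}

/-- The `n × m` grid graph `Pₙ □ Pₘ`. -/
def gridGraph (n m : ℕ) : SimpleGraph (Fin n × Fin m) :=
  (pathGraph n) □ (pathGraph m)

/-- A boundary vertex of a grid: degree at most 3. -/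
def IsBoundary {V : Type*} (G : SimpleGraph V) (v : V) : Prop :=
  (G.neighborSet v).ncard ≤ 3


namespace Scratch

variable {W : Type*} {G : SimpleGraph W} {A : Set W} {v : W}

def reach (G : SimpleGraph W) (A : Set W) : ℕ → W → Prop
  | 0, v => v ∈ A
  | n+1, v => reach G A n v ∨
      ∃ T : Finset W, 3 ≤ T.card ∧ (∀ u ∈ T, G.Adj u v) ∧ ∀ u ∈ T, reach G A n u

lemma reach_mono {n n' : ℕ} (h : n ≤ n') (hr : reach G A n v) : reach G A n' v := by
  induction h with
  | refl => exact hr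
  | step _ ih => exact Or.inl ih

lemma infected_reach (h : Infected G 3 A v) : ∃ n, reach G A n v := by
  induction h with
  | init hv => exact ⟨0, hv⟩
  | step T hcard hadj hinf ih =>
    choose f hf using ih
    refine ⟨(T.attach.sup fun u => f u.1 u.2) + 1, Or.inr ⟨T, hcard, hadj, fun u hu => ?_⟩⟩
    exact reach_mono (Finset.le_sup (Finset.mem_attach _ ⟨u, hu⟩)) (hf u hu)

noncomputable def rho (G : SimpleGraph W) (A : Set W) (v : W) : ℕ := sInf {n | reach G A n v}

lemma rho_spec (h : Infected G 3 A v) (hv : v ∉ A) :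
    ∃ T : Finset W, 3 ≤ T.card ∧ ∀ u ∈ T, G.Adj u v ∧ rho G A u < rho G A v := by
  have hne : {n | reach G A n v}.Nonempty := infected_reach h
  have hmem : reach G A (rho G A v) v := Nat.sInf_mem hne
  rcases hk : rho G A v with _ | k
  · rw [hk] at hmem; exact absurd hmem hv
  · rw [hk] at hmem
    rcases hmem with hmem | ⟨T, hc, hadj, hrk⟩
    · have : rho G A v ≤ k := Nat.sInf_le hmem
      omega
    · exact ⟨T, hc, fun u hu => ⟨hadj u hu,
        lt_of_le_of_lt (Nat.sInf_le (hrk u hu)) (by omega)⟩⟩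

lemma grid_adj {m : ℕ} {x y : Fin 5 × Fin m} :
    (gridGraph 5 m).Adj x y ↔
      ((((x.1:ℕ) + 1 = (y.1:ℕ) ∨ (y.1:ℕ) + 1 = (x.1:ℕ)) ∧ x.2 = y.2) ∨
       (x.1 = y.1 ∧ ((x.2:ℕ) + 1 = (y.2:ℕ) ∨ (y.2:ℕ) + 1 = (x.2:ℕ)))) := by
  cases x; cases y
  simp [gridGraph, boxProd_adj, pathGraph_adj]
  tauto

lemma card_triple_le {α : Type*} [DecidableEq α] (a b c : α) :
    ({a, b, c} : Finset α).card ≤ 3 := by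
  apply le_trans (Finset.card_insert_le _ _)
  have := Finset.card_insert_le b ({c} : Finset α)
  simp at this ⊢
  omega

section Grid

variable {m : ℕ} {A : Finset (Fin 5 × Fin m)}

lemma corner_mem (hA : Percolates (gridGraph 5 m) 3 ↑A)
    (r r' : Fin 5) (c c' : Fin m)
    (hr : ∀ x : Fin 5, ((x:ℕ)+1 = (r:ℕ) ∨ (r:ℕ)+1 = (x:ℕ)) → x = r')
    (hc : ∀ y : Fin m, ((y:ℕ)+1 = (c:ℕ) ∨ (c:ℕ)+1 = (y:ℕ)) → y = c') :
    (r, c) ∈ A := by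
  by_contra hv
  cases hA (r, c) with
  | init h => exact hv h
  | step T hcard hadj _ =>
    have hsub : T ⊆ {(r', c), (r, c')} := by
      intro u hu
      rcases grid_adj.mp (hadj u hu) with ⟨h1, h2⟩ | ⟨h1, h2⟩
      · exact Finset.mem_insert.mpr (Or.inl (Prod.ext (hr _ h1) h2))
      · refine Finset.mem_insert.mpr (Or.inr ?_)
        exact Finset.mem_singleton.mpr (Prod.ext h1 (hc _ h2))
    have h1 := Finset.card_le_card hsub
    have h2 := Finset.card_insert_le (r', c) ({(r, c')} : Finset (Fin 5 × Fin m))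
    simp at h2
    omega

lemma row_forced (hA : Percolates (gridGraph 5 m) 3 ↑A)
    (r r' : Fin 5)
    (hrr : ∀ x : Fin 5, ((x:ℕ)+1 = (r:ℕ) ∨ (r:ℕ)+1 = (x:ℕ)) ↔ x = r')
    {j : ℕ} (h1 : 1 ≤ j) (h2 : j + 2 ≤ m)
    (hv : (r, (⟨j, by omega⟩ : Fin m)) ∉ A) :
    rho (gridGraph 5 m) ↑A (r, ⟨j+1, by omega⟩) < rho (gridGraph 5 m) ↑A (r, ⟨j, by omega⟩) ∧
    rho (gridGraph 5 m) ↑A (r, ⟨j-1, by omega⟩) < rho (gridGraph 5 m) ↑A (r, ⟨j, by omega⟩) := by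
  obtain ⟨T, hcard, hT⟩ := rho_spec (hA _) (by simpa using hv)
  have hsub : T ⊆ ({(r', ⟨j, by omega⟩), (r, ⟨j-1, by omega⟩), (r, ⟨j+1, by omega⟩)} :
      Finset (Fin 5 × Fin m)) := by
    intro u hu
    rcases grid_adj.mp ((hT u hu).1) with ⟨hx, hy⟩ | ⟨hx, hy⟩
    · exact Finset.mem_insert.mpr (Or.inl (Prod.ext ((hrr _).mp hx) hy))
    · refine Finset.mem_insert.mpr (Or.inr ?_)
      rcases hy with hy | hy
      · refine Finset.mem_insert.mpr (Or.inl ?_)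
        refine Prod.ext hx (Fin.ext ?_)
        simp at hy ⊢
        omega
      · refine Finset.mem_insert.mpr (Or.inr (Finset.mem_singleton.mpr ?_))
        refine Prod.ext hx (Fin.ext ?_)
        simp at hy ⊢
        omega
  have hTN : T = _ := Finset.eq_of_subset_of_card_le hsub
    (le_trans (card_triple_le _ _ _) hcard)
  constructor
  · refine (hT _ ?_).2
    rw [hTN]
    exact Finset.mem_insert_of_mem (Finset.mem_insert_of_mem (Finset.mem_singleton_self _))
  · refine (hT _ ?_).2
    rw [hTN]
    exact Finset.mem_insert_of_mem (Finset.mem_insert_self _ _)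

lemma row_pair (hA : Percolates (gridGraph 5 m) 3 ↑A)
    (r r' : Fin 5)
    (hrr : ∀ x : Fin 5, ((x:ℕ)+1 = (r:ℕ) ∨ (r:ℕ)+1 = (x:ℕ)) ↔ x = r')
    {j : ℕ} (h1 : 1 ≤ j) (h2 : j + 3 ≤ m) :
    (r, (⟨j, by omega⟩ : Fin m)) ∈ A ∨ (r, (⟨j+1, by omega⟩ : Fin m)) ∈ A := by
  by_contra h
  push_neg at h
  have H1 := (row_forced hA r r' hrr h1 (by omega) h.1).1
  have H2 := (row_forced hA r r' hrr (j := j+1) (by omega) (by omega) h.2).2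
  simp only [Nat.add_sub_cancel] at H2
  omega

end Grid

lemma alt_exists {m : ℕ} (hm : 6 ≤ m) (heven : Even m) (Q : ℕ → Prop)
    (h0 : Q 0) (hl : Q (m-1)) (hor : ∀ j, j + 2 ≤ m → Q j ∨ Q (j+1)) :
    ∃ j, j + 2 ≤ m ∧ Q j ∧ Q (j+1) := by
  by_contra hcon
  push_neg at hcon
  have key : ∀ j, j + 1 ≤ m → (Q j ↔ Even j) := by
    intro j
    induction j with
    | zero => intro _; simpa using h0
    | succ k ih =>
      intro hk
      have ihk := ih (by omega)
      have hork := hor k (by omega)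
      have hnot := hcon k (by omega)
      rw [Nat.even_add_one, ← ihk]
      constructor
      · intro hq hqk; exact (hnot hqk) hq
      · intro hnq
        rcases hork with h | h
        · exact absurd h hnq
        · exact h
  have h1 := (key (m-1) (by omega)).mp hl
  obtain ⟨a, ha⟩ := heven
  rcases h1 with ⟨b, hb⟩
  omega


lemma path_deg_le_two (n : ℕ) [DecidableRel (pathGraph n).Adj] (j : Fin n) :
    (pathGraph n).degree j ≤ 2 := by
  have h : ((pathGraph n).neighborFinset j).card ≤ ({0, 1} : Finset ℕ).card := by
    apply Finset.card_le_card_of_injOn (fun x : Fin n => if (x : ℕ) + 1 = (j : ℕ) then (0:ℕ) else 1)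
    · intro a _
      by_cases h : (a : ℕ) + 1 = (j : ℕ) <;> simp [h]
    · intro a ha b hb hab
      simp only [Finset.coe_sort_coe, Finset.mem_coe, mem_neighborFinset, pathGraph_adj] at ha hb
      by_cases h1 : (a : ℕ) + 1 = (j : ℕ) <;> by_cases h2 : (b : ℕ) + 1 = (j : ℕ) <;>
        simp [h1, h2] at hab ⊢ <;> apply Fin.ext <;> omega
  simpa using h

lemma path_deg_end (n : ℕ) [DecidableRel (pathGraph n).Adj] (j x0 : Fin n)
    (h : ∀ x : Fin n, (pathGraph n).Adj j x → x = x0) :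
    (pathGraph n).degree j ≤ 1 := by
  apply Finset.card_le_one.mpr
  intro a ha b hb
  rw [mem_neighborFinset] at ha hb
  rw [h a ha, h b hb]

lemma path_sum_deg (n : ℕ) (hn : 2 ≤ n) [DecidableRel (pathGraph n).Adj] :
    ∑ j : Fin n, (pathGraph n).degree j ≤ 2 * n - 2 := by
  set a : Fin n := ⟨0, by omega⟩ with ha'
  set b : Fin n := ⟨n - 1, by omega⟩ with hb'
  have hab : b ≠ a := by
    simp [ha', hb', Fin.ext_iff]
    omega
  have ha : (pathGraph n).degree a ≤ 1 := by
    apply path_deg_end n a ⟨1, by omega⟩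
    intro x hx
    rw [pathGraph_adj] at hx
    apply Fin.ext
    simp [ha'] at hx ⊢
    omega
  have hb : (pathGraph n).degree b ≤ 1 := by
    apply path_deg_end n b ⟨n - 2, by omega⟩
    intro x hx
    rw [pathGraph_adj] at hx
    have := x.isLt
    apply Fin.ext
    simp [hb'] at hx ⊢
    omega
  have e1 : ∑ j : Fin n, (pathGraph n).degree j
      = (pathGraph n).degree a + ∑ j ∈ Finset.univ.erase a, (pathGraph n).degree j :=
    (Finset.add_sum_erase _ _ (Finset.mem_univ a)).symm
  have e2 : ∑ j ∈ Finset.univ.erase a, (pathGraph n).degree j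
      = (pathGraph n).degree b + ∑ j ∈ (Finset.univ.erase a).erase b, (pathGraph n).degree j :=
    (Finset.add_sum_erase _ _ (Finset.mem_erase.mpr ⟨hab, Finset.mem_univ b⟩)).symm
  have e3 : ∑ j ∈ (Finset.univ.erase a).erase b, (pathGraph n).degree j
      ≤ ((Finset.univ.erase a).erase b).card * 2 := by
    apply Finset.sum_le_card_nsmul
    intro j _
    exact path_deg_le_two n j
  have e4 : ((Finset.univ.erase a).erase b).card = n - 2 := by
    rw [Finset.card_erase_of_mem (Finset.mem_erase.mpr ⟨hab, Finset.mem_univ b⟩),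
      Finset.card_erase_of_mem (Finset.mem_univ a)]
    simp
    omega
  rw [e1, e2]
  rw [e4] at e3
  omega

lemma grid_edge_bound {m : ℕ} (hm : 6 ≤ m) [DecidableRel (gridGraph 5 m).Adj] :
    2 * (gridGraph 5 m).edgeFinset.card ≤ 18 * m - 10 := by
  classical
  have hdeg : ∀ x : Fin 5 × Fin m,
      (gridGraph 5 m).degree x = (pathGraph 5).degree x.1 + (pathGraph m).degree x.2 := by
    intro x
    convert degree_boxProd (G := pathGraph 5) (H := pathGraph m) x
    rfl
  have hsum := (sum_degrees_eq_twice_card_edges (gridGraph 5 m)).symm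
  have h5 : ∑ i : Fin 5, (pathGraph 5).degree i ≤ 8 := by
    have := path_sum_deg 5 (by norm_num)
    simpa using this
  have hmm : ∑ j : Fin m, (pathGraph m).degree j ≤ 2 * m - 2 := path_sum_deg m (by omega)
  have hprod : ∑ x : Fin 5 × Fin m, (gridGraph 5 m).degree x
      = m * (∑ i : Fin 5, (pathGraph 5).degree i) + 5 * (∑ j : Fin m, (pathGraph m).degree j) := by
    simp_rw [hdeg]
    rw [Fintype.sum_prod_type]
    simp [Finset.sum_add_distrib, Finset.sum_const, Finset.card_univ, Finset.mul_sum, mul_comm]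
    rw [Finset.sum_comm (f := fun (x : Fin 5) (y : Fin m) => (pathGraph m).degree y)]
    simp [Finset.sum_const]
    apply Finset.sum_congr rfl; intro i _
    rw [Finset.sum_const_nat (m := (pathGraph 5).degree i) (fun _ _ => by convert rfl)]
    simp
  have hb : m * (∑ i : Fin 5, (pathGraph 5).degree i) ≤ m * 8 :=
    Nat.mul_le_mul_left m h5
  have hb2 : 5 * (∑ j : Fin m, (pathGraph m).degree j) ≤ 5 * (2 * m - 2) :=
    Nat.mul_le_mul_left 5 hmm
  have heq : 2 * (gridGraph 5 m).edgeFinset.card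
      = m * (∑ i : Fin 5, (pathGraph 5).degree i) + 5 * (∑ j : Fin m, (pathGraph m).degree j) := by
    rw [← hprod]
    exact hsum.symm ▸ rfl
  omega

end Scratch

lemma dec_row0 : ∀ x : Fin 5, (((x:ℕ)+1 = (((⟨0, by omega⟩ : Fin 5)):ℕ) ∨ (((⟨0, by omega⟩ : Fin 5)):ℕ)+1 = (x:ℕ)) ↔ x = (⟨1, by omega⟩ : Fin 5)) := by decide

lemma dec_row4 : ∀ x : Fin 5, (((x:ℕ)+1 = (((⟨4, by omega⟩ : Fin 5)):ℕ) ∨ (((⟨4, by omega⟩ : Fin 5)):ℕ)+1 = (x:ℕ)) ↔ x = (⟨3, by omega⟩ : Fin 5)) := by decide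


open Scratch in
theorem stmt_15 (m : ℕ) (hm : 6 ≤ m) (heven : Even m) :
    2 * m + 3 ≤ percNum (Fin 5 × Fin m) (gridGraph 5 m) 3 := by
  classical
  have huniv : Percolates (gridGraph 5 m) 3 ↑(Finset.univ : Finset (Fin 5 × Fin m)) :=
    fun v => Infected.init (by simp)
  refine le_csInf ⟨_, Finset.univ, rfl, huniv⟩ ?_
  rintro k ⟨A, rfl, hA⟩
  by_contra hk
  push_neg at hk
  -- corners
  have hcornerN : ∀ (c c' : Fin m), (∀ y : Fin m, ((y:ℕ)+1 = (c:ℕ) ∨ (c:ℕ)+1 = (y:ℕ)) → y = c') →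
      ((⟨0, by omega⟩ : Fin 5), c) ∈ A ∧ ((⟨4, by omega⟩ : Fin 5), c) ∈ A := by
    intro c c' hc
    constructor
    · exact corner_mem hA _ ⟨1, by omega⟩ c c' (fun x h => (dec_row0 x).mp h) hc
    · exact corner_mem hA _ ⟨3, by omega⟩ c c' (fun x h => (dec_row4 x).mp h) hc
  have hc0 : ∀ y : Fin m, ((y:ℕ)+1 = ((⟨0, by omega⟩ : Fin m):ℕ) ∨ ((⟨0, by omega⟩ : Fin m):ℕ)+1 = (y:ℕ)) → y = (⟨1, by omega⟩ : Fin m) := by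
    intro y hy
    apply Fin.ext
    simp at hy ⊢
    omega
  have hcl : ∀ y : Fin m, ((y:ℕ)+1 = ((⟨m-1, by omega⟩ : Fin m):ℕ) ∨ ((⟨m-1, by omega⟩ : Fin m):ℕ)+1 = (y:ℕ)) → y = (⟨m-2, by omega⟩ : Fin m) := by
    intro y hy
    have := y.isLt
    apply Fin.ext
    simp at hy ⊢
    omega
  obtain ⟨c000, c400⟩ := hcornerN ⟨0, by omega⟩ ⟨1, by omega⟩ hc0
  obtain ⟨c0l, c4l⟩ := hcornerN ⟨m-1, by omega⟩ ⟨m-2, by omega⟩ hcl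
  -- row pairs
  have hrow : ∀ (r r' : Fin 5), (∀ x : Fin 5, ((x:ℕ)+1 = (r:ℕ) ∨ (r:ℕ)+1 = (x:ℕ)) ↔ x = r') →
      (r, (⟨0, by omega⟩ : Fin m)) ∈ A → (r, (⟨m-1, by omega⟩ : Fin m)) ∈ A →
      ∃ j, j + 2 ≤ m ∧ (∃ h : j < m, (r, (⟨j, h⟩ : Fin m)) ∈ A) ∧
        (∃ h : j+1 < m, (r, (⟨j+1, h⟩ : Fin m)) ∈ A) := by
    intro r r' hrr hca hcb
    refine alt_exists hm heven (fun j => ∃ h : j < m, (r, (⟨j, h⟩ : Fin m)) ∈ A)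
      ⟨by omega, hca⟩ ⟨by omega, ?_⟩ ?_
    · have hmm : m - 1 + 1 = m := by omega
      exact hcb
    · intro j hj
      rcases Nat.eq_zero_or_pos j with rfl | hj1
      · exact Or.inl ⟨by omega, hca⟩
      · by_cases hj3 : j + 3 ≤ m
        · rcases row_pair hA r r' hrr hj1 hj3 with h | h
          · exact Or.inl ⟨by omega, h⟩
          · exact Or.inr ⟨by omega, h⟩
        · refine Or.inr ⟨by omega, ?_⟩
          have hfin : (⟨j+1, by omega⟩ : Fin m) = ⟨m-1, by omega⟩ := by
            apply Fin.ext; simp; omega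
          rw [hfin]
          exact hcb
  obtain ⟨j1, hj1m, ⟨hj1a, hA1⟩, ⟨hj1b, hA1'⟩⟩ := hrow ⟨0, by omega⟩ ⟨1, by omega⟩ dec_row0 c000 c0l
  obtain ⟨j2, hj2m, ⟨hj2a, hA2⟩, ⟨hj2b, hA2'⟩⟩ := hrow ⟨4, by omega⟩ ⟨3, by omega⟩ dec_row4 c400 c4l
  -- the two edges inside A
  set v1 : Fin 5 × Fin m := (⟨0, by omega⟩, ⟨j1, hj1a⟩) with hv1
  set w1 : Fin 5 × Fin m := (⟨0, by omega⟩, ⟨j1+1, hj1b⟩) with hw1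
  set v2 : Fin 5 × Fin m := (⟨4, by omega⟩, ⟨j2, hj2a⟩) with hv2
  set w2 : Fin 5 × Fin m := (⟨4, by omega⟩, ⟨j2+1, hj2b⟩) with hw2
  have hadj1 : (gridGraph 5 m).Adj v1 w1 := by
    rw [grid_adj]
    exact Or.inr ⟨rfl, Or.inl rfl⟩
  have hadj2 : (gridGraph 5 m).Adj v2 w2 := by
    rw [grid_adj]
    exact Or.inr ⟨rfl, Or.inl rfl⟩
  haveI : DecidableRel (gridGraph 5 m).Adj := Classical.decRel _
  set e1 : Sym2 (Fin 5 × Fin m) := s(v1, w1) with he1'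
  set e2 : Sym2 (Fin 5 × Fin m) := s(v2, w2) with he2'
  have he1 : e1 ∈ (gridGraph 5 m).edgeFinset := by
    rw [he1', mem_edgeFinset]
    exact hadj1
  have he2 : e2 ∈ (gridGraph 5 m).edgeFinset := by
    rw [he2', mem_edgeFinset]
    exact hadj2
  have hne12 : e1 ≠ e2 := by
    rw [he1', he2']
    intro h
    rw [Sym2.eq_iff] at h
    rcases h with ⟨h, -⟩ | ⟨h, -⟩ <;>
    · rw [hv1] at h
      first
        | (rw [hv2] at h; exact absurd (congrArg (fun p => (p.1 : ℕ)) h) (by simp))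
        | (rw [hw2] at h; exact absurd (congrArg (fun p => (p.1 : ℕ)) h) (by simp))
  -- choice of witnessing sets
  have hTex : ∀ v : Fin 5 × Fin m, ∃ T : Finset (Fin 5 × Fin m), v ∉ A →
      3 ≤ T.card ∧ ∀ u ∈ T, (gridGraph 5 m).Adj u v ∧
        rho (gridGraph 5 m) ↑A u < rho (gridGraph 5 m) ↑A v := by
    intro v
    by_cases hv : v ∈ A
    · exact ⟨∅, fun h => absurd hv h⟩
    · obtain ⟨T, h1, h2⟩ := rho_spec (hA v) (by simpa using hv)
      exact ⟨T, fun _ => ⟨h1, h2⟩⟩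
  choose T hT using hTex
  set U : Finset (Fin 5 × Fin m) := Aᶜ with hU
  set S : Finset ((_ : Fin 5 × Fin m) × (Fin 5 × Fin m)) := U.sigma (fun v => T v) with hS
  have hScard : 3 * U.card ≤ S.card := by
    rw [hS, Finset.card_sigma]
    calc 3 * U.card = ∑ _v ∈ U, 3 := by rw [Finset.sum_const, smul_eq_mul, mul_comm]
    _ ≤ ∑ v ∈ U, (T v).card :=
        Finset.sum_le_sum (fun v hv => (hT v (Finset.mem_compl.mp hv)).1)
  have hmap : ∀ p ∈ S, s(p.2, p.1) ∈ (gridGraph 5 m).edgeFinset \ ({e1, e2} : Finset _) := by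
    intro p hp
    rw [hS, Finset.mem_sigma] at hp
    obtain ⟨hp1, hp2⟩ := hp
    have hp1' : p.1 ∉ A := Finset.mem_compl.mp hp1
    have hadj := (hT p.1 hp1').2 p.2 hp2
    rw [Finset.mem_sdiff]
    constructor
    · rw [mem_edgeFinset]
      exact hadj.1
    · intro hmem
      have hin : p.1 ∈ A := by
        rcases Finset.mem_insert.mp hmem with h | h
        · rw [he1', Sym2.eq_iff] at h
          rcases h with ⟨-, h⟩ | ⟨-, h⟩
          · exact h ▸ hA1'
          · exact h ▸ hA1
        · rw [Finset.mem_singleton, he2', Sym2.eq_iff] at h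
          rcases h with ⟨-, h⟩ | ⟨-, h⟩
          · exact h ▸ hA2'
          · exact h ▸ hA2
      exact hp1' hin
  have hinj : Set.InjOn (fun p : (_ : Fin 5 × Fin m) × (Fin 5 × Fin m) => s(p.2, p.1)) S := by
    rintro ⟨pa, pb⟩ hp ⟨qa, qb⟩ hq hpq
    replace hp := Finset.mem_sigma.mp (Finset.mem_coe.mp hp)
    replace hq := Finset.mem_sigma.mp (Finset.mem_coe.mp hq)
    simp only [Sym2.eq_iff] at hpq
    have hrp := (hT pa (Finset.mem_compl.mp hp.1)).2 pb hp.2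
    have hrq := (hT qa (Finset.mem_compl.mp hq.1)).2 qb hq.2
    rcases hpq with ⟨h1, h2⟩ | ⟨h1, h2⟩
    · rw [h1, h2]
    · exfalso
      rw [h1] at hrp
      rw [← h2] at hrq
      omega
  have hcount : S.card ≤ ((gridGraph 5 m).edgeFinset \ ({e1, e2} : Finset _)).card :=
    Finset.card_le_card_of_injOn _ hmap hinj
  have hsub2 : ({e1, e2} : Finset (Sym2 (Fin 5 × Fin m))) ⊆ (gridGraph 5 m).edgeFinset := by
    intro e he
    rcases Finset.mem_insert.mp he with rfl | he
    · exact he1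
    · rw [Finset.mem_singleton] at he
      exact he ▸ he2
  have hsdcard : ((gridGraph 5 m).edgeFinset \ ({e1, e2} : Finset _)).card
      = (gridGraph 5 m).edgeFinset.card - 2 := by
    rw [Finset.card_sdiff_of_subset hsub2, Finset.card_pair hne12]
  have hedge : 2 * (gridGraph 5 m).edgeFinset.card ≤ 18 * m - 10 := grid_edge_bound hm
  have hUcard : U.card = 5 * m - A.card := by
    rw [hU, Finset.card_compl]
    congr 1
    simp
  have hAle : A.card ≤ Fintype.card (Fin 5 × Fin m) := A.card_le_univ
  simp only [Fintype.card_prod, Fintype.card_fin] at hAle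
  omega
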